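/- arXiv:2212.07319 — 2 statements merged into one kernel-verified Lean document; each statement's English description precedes it below -/
import Mathlib

section
/- Let G = C(α_1,…,α_{2k}) be a C-graph with adjacency matrix A. Then the multiplicity m_0 of the eigenvalue 0 of A equals ∑_{i=1}^{k} α_{2i} − k. -/
open Matrix BigOperators
open scoped Classical

/-- The equivalence splitting off the last cell of `Σ j : Fin (m+1), Fin (α j)`. -/
def splitLast (α : ℕ → ℕ) (m : ℕ) :
    (Σ j : Fin (m + 1), Fin (α j.val)) ≃ (Σ j : Fin m, Fin (α j.val)) ⊕ Fin (α m) where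
  toFun x :=
    if h : x.1.val < m then Sum.inl ⟨⟨x.1.val, h⟩, x.2⟩
    else Sum.inr (Fin.cast (congrArg α
      (Nat.le_antisymm (Nat.lt_succ_iff.mp x.1.isLt) (Nat.le_of_not_lt h))) x.2)
  invFun x :=
    match x with
    | Sum.inl y => ⟨⟨y.1.val, Nat.lt_succ_of_lt y.1.isLt⟩, y.2⟩
    | Sum.inr a => ⟨⟨m, Nat.lt_succ_self m⟩, a⟩
  left_inv := by
    rintro ⟨⟨jv, hj⟩, a⟩
    by_cases h : jv < m
    · simp [h]
    · have hm : jv = m := Nat.le_antisymm (Nat.lt_succ_iff.mp hj) (Nat.le_of_not_lt h)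
      subst hm
      simp [h, Fin.cast]
  right_inv := by
    rintro (⟨⟨jv, hj⟩, a⟩ | a)
    · simp [hj]
    · simp [Fin.cast]

/-- The cograph `C(α 0, α 1, …, α (m-1))` (1-indexed in the paper: `C(α_1,…,α_m)`),
defined recursively: `C(α_1)` is the complement of the complete graph `K_{α_1}`, and
`C(α_1,…,α_i)` is the complement of the disjoint union of `C(α_1,…,α_{i-1})` and `K_{α_i}`.
The vertices added at step `j` (the cell `C_j`) are the pairs `⟨j, a⟩`. -/
def cographC (α : ℕ → ℕ) : (m : ℕ) → SimpleGraph (Σ j : Fin m, Fin (α j.val))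
  | 0 => ⊥
  | m + 1 =>
      SimpleGraph.comap (splitLast α m)
        ((cographC α m ⊕g (⊤ : SimpleGraph (Fin (α m))))ᶜ)

/-- The real adjacency matrix of a finite simple graph. -/
noncomputable def adjMat {V : Type*} [Fintype V] (G : SimpleGraph V) : Matrix V V ℝ :=
  Matrix.of fun u v => if G.Adj u v then (1 : ℝ) else 0

lemma sigmaFin_eq_iff {β : ℕ → ℕ} {m : ℕ} (p q : Σ j : Fin m, Fin (β j.val)) :
    p = q ↔ p.1.val = q.1.val ∧ p.2.val = q.2.val := by
  constructor
  · rintro rfl; exact ⟨rfl, rfl⟩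
  · rcases p with ⟨⟨i, hi⟩, a⟩
    rcases q with ⟨⟨j, hj⟩, b⟩
    rintro ⟨h1, h2⟩
    dsimp at h1 h2
    subst h1
    obtain rfl : a = b := Fin.ext h2
    rfl

lemma splitLast_of_lt {α : ℕ → ℕ} {m : ℕ} (x : Σ j : Fin (m + 1), Fin (α j.val))
    (h : x.1.val < m) : splitLast α m x = Sum.inl ⟨⟨x.1.val, h⟩, x.2⟩ := dif_pos h

lemma splitLast_of_eq {α : ℕ → ℕ} {m : ℕ} (x : Σ j : Fin (m + 1), Fin (α j.val))
    (h : ¬ x.1.val < m) : splitLast α m x = Sum.inr (Fin.cast (congrArg α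
      (Nat.le_antisymm (Nat.lt_succ_iff.mp x.1.isLt) (Nat.le_of_not_lt h))) x.2) := dif_neg h

lemma parity_flip (m i j : ℕ) :
    (¬((i ≠ j ∧ Odd (m + max i j)) ∨ (i = j ∧ Even (m + j)))) ↔
      ((i ≠ j ∧ Odd (m + 1 + max i j)) ∨ (i = j ∧ Even (m + 1 + j))) := by
  by_cases h : i = j
  · subst h
    simp [Nat.even_add_one, Nat.not_even_iff_odd,
      show m + 1 + i = (m + i) + 1 from by ring, Nat.odd_add_one]
  · simp [h, Nat.odd_add_one, Nat.not_odd_iff_even,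
      show m + 1 + max i j = (m + max i j) + 1 from by ring, Nat.even_add_one]

theorem cographC_adj (α : ℕ → ℕ) (m : ℕ) (x y : Σ j : Fin m, Fin (α j.val)) :
    (cographC α m).Adj x y ↔ x ≠ y ∧
      ((x.1.val ≠ y.1.val ∧ Odd (m + max x.1.val y.1.val)) ∨
       (x.1.val = y.1.val ∧ Even (m + y.1.val))) := by
  induction m with
  | zero => exact x.1.elim0
  | succ m ih =>
    show ((cographC α m ⊕g (⊤ : SimpleGraph (Fin (α m))))ᶜ).Adj
      (splitLast α m x) (splitLast α m y) ↔ _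
    rw [SimpleGraph.compl_adj]
    by_cases h1 : x.1.val < m <;> by_cases h2 : y.1.val < m
    · rw [splitLast_of_lt x h1, splitLast_of_lt y h2]
      have hinl : (Sum.inl (⟨⟨x.1.val, h1⟩, x.2⟩ : Σ j : Fin m, Fin (α j.val)) :
            (Σ j : Fin m, Fin (α j.val)) ⊕ Fin (α m)) ≠
            Sum.inl ⟨⟨y.1.val, h2⟩, y.2⟩ ↔ x ≠ y := by
        simp only [ne_eq, Sum.inl.injEq]
        exact not_congr ((sigmaFin_eq_iff _ _).trans (sigmaFin_eq_iff x y).symm)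
      rw [hinl]
      refine and_congr_right fun hxy => ?_
      have huv : (⟨⟨x.1.val, h1⟩, x.2⟩ : Σ j : Fin m, Fin (α j.val)) ≠ ⟨⟨y.1.val, h2⟩, y.2⟩ := by
        rw [ne_eq, sigmaFin_eq_iff]
        rw [ne_eq, sigmaFin_eq_iff] at hxy
        exact hxy
      have hadj : (cographC α m ⊕g (⊤ : SimpleGraph (Fin (α m)))).Adj
          (Sum.inl ⟨⟨x.1.val, h1⟩, x.2⟩) (Sum.inl ⟨⟨y.1.val, h2⟩, y.2⟩) ↔
          (cographC α m).Adj ⟨⟨x.1.val, h1⟩, x.2⟩ ⟨⟨y.1.val, h2⟩, y.2⟩ := Iff.rfl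
      rw [hadj, ih]
      exact (not_congr (and_iff_right huv)).trans (parity_flip m x.1.val y.1.val)
    · rw [splitLast_of_lt x h1, splitLast_of_eq y h2]
      have hym : y.1.val = m := Nat.le_antisymm (Nat.lt_succ_iff.mp y.1.isLt) (Nat.le_of_not_lt h2)
      have hxyv : x.1.val ≠ y.1.val := by omega
      have hmax : max x.1.val y.1.val = m := by omega
      refine iff_of_true ⟨(fun h => by cases h), (fun h => by cases h)⟩
        ⟨fun h => hxyv (congrArg (fun z => z.1.val) h), Or.inl ⟨hxyv, ?_⟩⟩
      rw [hmax]
      exact ⟨m, by ring⟩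
    · rw [splitLast_of_eq x h1, splitLast_of_lt y h2]
      have hxm : x.1.val = m := Nat.le_antisymm (Nat.lt_succ_iff.mp x.1.isLt) (Nat.le_of_not_lt h1)
      have hxyv : x.1.val ≠ y.1.val := by omega
      have hmax : max x.1.val y.1.val = m := by omega
      refine iff_of_true ⟨(fun h => by cases h), (fun h => by cases h)⟩
        ⟨fun h => hxyv (congrArg (fun z => z.1.val) h), Or.inl ⟨hxyv, ?_⟩⟩
      rw [hmax]
      exact ⟨m, by ring⟩
    · rw [splitLast_of_eq x h1, splitLast_of_eq y h2]
      have hxm : x.1.val = m := Nat.le_antisymm (Nat.lt_succ_iff.mp x.1.isLt) (Nat.le_of_not_lt h1)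
      have hym : y.1.val = m := Nat.le_antisymm (Nat.lt_succ_iff.mp y.1.isLt) (Nat.le_of_not_lt h2)
      refine iff_of_false ?_ ?_
      · rintro ⟨hne, hnadj⟩
        refine hnadj ?_
        have : (Fin.cast _ x.2 : Fin (α m)) ≠ Fin.cast _ y.2 := fun hab => hne (by rw [hab])
        exact this
      · rintro ⟨hxy, (⟨h, _⟩ | ⟨_, h⟩)⟩
        · exact h (hxm.trans hym.symm)
        · rcases h with ⟨r, hr⟩
          omega
lemma odd_shift (k n : ℕ) : Odd (2 * k + n) ↔ Odd n := by
  constructor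
  · rintro ⟨r, hr⟩; exact ⟨r - k, by omega⟩
  · rintro ⟨r, hr⟩; exact ⟨r + k, by omega⟩

lemma even_shift (k n : ℕ) : Even (2 * k + n) ↔ Even n := by
  constructor
  · rintro ⟨r, hr⟩; exact ⟨r - k, by omega⟩
  · rintro ⟨r, hr⟩; exact ⟨r + k, by omega⟩

lemma adjMat_cograph_apply (k : ℕ) (α : ℕ → ℕ) (u v : Σ j : Fin (2*k), Fin (α j.val)) :
    adjMat (cographC α (2*k)) u v =
      if (u ≠ v ∧ ((u.1.val ≠ v.1.val ∧ Odd (max u.1.val v.1.val)) ∨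
        (u.1.val = v.1.val ∧ Even v.1.val))) then 1 else 0 := by
  show (if (cographC α (2*k)).Adj u v then (1:ℝ) else 0) = _
  refine if_congr ?_ rfl rfl
  rw [cographC_adj]
  exact and_congr_right fun _ => or_congr (and_congr_right fun _ => odd_shift _ _)
    (and_congr_right fun _ => even_shift _ _)

noncomputable def csum (k : ℕ) (α : ℕ → ℕ) (x : (Σ j : Fin (2*k), Fin (α j.val)) → ℝ)
    (j : ℕ) : ℝ :=
  if h : j < 2*k then ∑ b : Fin (α j), x ⟨⟨j, h⟩, b⟩ else 0

noncomputable def qsum (k : ℕ) (α : ℕ → ℕ) (x : (Σ j : Fin (2*k), Fin (α j.val)) → ℝ)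
    (i : ℕ) : ℝ := ∑ l ∈ Finset.Ico i k, csum k α x (2*l+1)

noncomputable def psum (k : ℕ) (α : ℕ → ℕ) (x : (Σ j : Fin (2*k), Fin (α j.val)) → ℝ)
    (j : ℕ) : ℝ := ∑ i ∈ Finset.range j, csum k α x i

lemma sum_odd_tail (f : ℕ → ℝ) (t K : ℕ) :
    ∑ i ∈ Finset.Ico t (2*K), (if Odd i then f i else 0) =
      ∑ l ∈ Finset.Ico (t/2) K, f (2*l+1) := by
  rw [← Finset.sum_filter]
  refine Finset.sum_nbij' (i := fun i => i / 2) (j := fun l => 2*l+1) ?_ ?_ ?_ ?_ ?_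
  · intro a ha
    rw [Finset.mem_filter, Finset.mem_Ico, Nat.odd_iff] at ha
    rw [Finset.mem_Ico]
    omega
  · intro l hl
    rw [Finset.mem_Ico] at hl
    rw [Finset.mem_filter, Finset.mem_Ico, Nat.odd_iff]
    omega
  · intro a ha
    rw [Finset.mem_filter, Finset.mem_Ico, Nat.odd_iff] at ha
    omega
  · intro l hl
    omega
  · intro a ha
    rw [Finset.mem_filter, Finset.mem_Ico, Nat.odd_iff] at ha
    exact congrArg f (by omega)
lemma master (k : ℕ) (α : ℕ → ℕ) (x : (Σ j : Fin (2*k), Fin (α j.val)) → ℝ)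
    (j : ℕ) (hj : j < 2*k) (a : Fin (α j)) :
    (adjMat (cographC α (2*k)) *ᵥ x) ⟨⟨j, hj⟩, a⟩ =
      (if Odd j then psum k α x j else 0) + qsum k α x ((j+1)/2)
        + (if Even j then csum k α x j - x ⟨⟨j, hj⟩, a⟩ else 0) := by
  set u : Σ j : Fin (2*k), Fin (α j.val) := ⟨⟨j, hj⟩, a⟩ with hu
  have step1 : (adjMat (cographC α (2*k)) *ᵥ x) u =
      ∑ w : Σ j : Fin (2*k), Fin (α j.val), adjMat (cographC α (2*k)) u w * x w := rfl
  -- define the ℕ-indexed summand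
  set g : ℕ → ℝ := fun i =>
    if i = j then (if Even j then csum k α x j - x u else 0)
    else (if Odd (max j i) then csum k α x i else 0) with hg
  have step2 : (adjMat (cographC α (2*k)) *ᵥ x) u = ∑ i ∈ Finset.range (2*k), g i := by
    rw [step1, ← Finset.univ_sigma_univ, Finset.sum_sigma, ← Fin.sum_univ_eq_sum_range]
    refine Finset.sum_congr rfl fun i _ => ?_
    by_cases hij : i.val = j
    · rw [hg]
      simp only [if_pos hij]
      have hi : i = ⟨j, hj⟩ := Fin.ext hij
      subst hi
      by_cases hEj : Even j
      · rw [if_pos hEj]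
        have hterm : ∀ b : Fin (α j),
            adjMat (cographC α (2*k)) u ⟨⟨j, hj⟩, b⟩ * x ⟨⟨j, hj⟩, b⟩ =
              if b = a then 0 else x ⟨⟨j, hj⟩, b⟩ := by
          intro b
          rw [adjMat_cograph_apply]
          by_cases hb : b = a
          · subst hb
            rw [if_neg (fun h => h.1 hu), if_pos rfl, zero_mul]
          · rw [if_pos, if_neg hb, one_mul]
            refine ⟨?_, Or.inr ⟨rfl, hEj⟩⟩
            rw [hu, ne_eq, sigmaFin_eq_iff]
            rintro ⟨-, h2⟩
            exact hb (Fin.ext h2.symm)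
        rw [Finset.sum_congr rfl fun b _ => hterm b]
        have : ∀ b : Fin (α j), (if b = a then 0 else x ⟨⟨j, hj⟩, b⟩) =
            x ⟨⟨j, hj⟩, b⟩ - (if b = a then x ⟨⟨j, hj⟩, b⟩ else 0) := by
          intro b; by_cases hb : b = a <;> simp [hb]
        rw [Finset.sum_congr rfl fun b _ => this b, Finset.sum_sub_distrib,
          Finset.sum_ite_eq' Finset.univ a (fun b => x ⟨⟨j, hj⟩, b⟩),
          if_pos (Finset.mem_univ a), csum, dif_pos hj]
      · rw [if_neg hEj]
        refine Finset.sum_eq_zero fun b _ => ?_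
        rw [adjMat_cograph_apply, if_neg, zero_mul]
        rintro ⟨-, (⟨h1, -⟩ | ⟨-, h2⟩)⟩
        · exact h1 rfl
        · exact hEj h2
    · rw [hg]
      simp only [if_neg hij]
      have hterm : ∀ b : Fin (α i.val),
          adjMat (cographC α (2*k)) u ⟨i, b⟩ * x ⟨i, b⟩ =
            if Odd (max j i.val) then x ⟨i, b⟩ else 0 := by
        intro b
        rw [adjMat_cograph_apply]
        by_cases hodd : Odd (max j i.val)
        · rw [if_pos, if_pos hodd, one_mul]
          refine ⟨?_, Or.inl ⟨fun h => hij h.symm, hodd⟩⟩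
          rw [hu, ne_eq, sigmaFin_eq_iff]
          rintro ⟨h1, -⟩
          exact hij h1.symm
        · rw [if_neg, if_neg hodd, zero_mul]
          rintro ⟨-, (⟨-, h2⟩ | ⟨h1, -⟩)⟩
          · exact hodd h2
          · exact hij h1.symm
      rw [Finset.sum_congr rfl fun b _ => hterm b]
      by_cases hodd : Odd (max j i.val)
      · simp only [if_pos hodd]
        rw [csum, dif_pos i.isLt]
      · simp only [if_neg hodd]
        exact Finset.sum_eq_zero fun b _ => rfl
  rw [step2]
  have hsplit : Finset.range (2*k) = Finset.Ico 0 (2*k) := by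
    rw [Finset.range_eq_Ico]
  rw [hsplit, ← Finset.sum_Ico_consecutive g (Nat.zero_le j) (le_of_lt hj),
    Finset.sum_eq_sum_Ico_succ_bot hj g]
  have h1 : ∑ i ∈ Finset.Ico 0 j, g i = (if Odd j then psum k α x j else 0) := by
    have : ∀ i ∈ Finset.Ico 0 j, g i = if Odd j then csum k α x i else 0 := by
      intro i hi
      rw [Finset.mem_Ico] at hi
      rw [hg]
      dsimp only
      rw [if_neg (by omega), max_eq_left (by omega)]
    rw [Finset.sum_congr rfl this]
    by_cases hoj : Odd j
    · simp only [if_pos hoj]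
      rw [psum, ← Finset.range_eq_Ico]
    · simp only [if_neg hoj, Finset.sum_const_zero]
  have h2 : g j = (if Even j then csum k α x j - x u else 0) := by rw [hg]; simp
  have h3 : ∑ i ∈ Finset.Ico (j+1) (2*k), g i = qsum k α x ((j+1)/2) := by
    have : ∀ i ∈ Finset.Ico (j+1) (2*k), g i = if Odd i then csum k α x i else 0 := by
      intro i hi
      rw [Finset.mem_Ico] at hi
      rw [hg]
      dsimp only
      rw [if_neg (by omega), max_eq_right (by omega)]
    rw [Finset.sum_congr rfl this, sum_odd_tail, qsum]
  rw [h1, h2, h3]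
  ring
lemma ker_structure (k : ℕ) (hk : 1 ≤ k) (α : ℕ → ℕ) (hα : ∀ i < 2 * k, 0 < α i)
    (x : (Σ j : Fin (2*k), Fin (α j.val)) → ℝ)
    (hx : adjMat (cographC α (2*k)) *ᵥ x = 0) :
    (∀ (j : ℕ) (hj : j < 2*k), Even j → ∀ a : Fin (α j), x ⟨⟨j, hj⟩, a⟩ = 0) ∧
    (∀ (j : ℕ) (hj : j < 2*k), Odd j → csum k α x j = 0) := by
  have hm : ∀ (j : ℕ) (hj : j < 2*k) (a : Fin (α j)),
      0 = (if Odd j then psum k α x j else 0) + qsum k α x ((j+1)/2)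
        + (if Even j then csum k α x j - x ⟨⟨j, hj⟩, a⟩ else 0) := by
    intro j hj a
    rw [← master k α x j hj a, hx]
    rfl
  have hO : ∀ t, t < k → psum k α x (2*t+1) + qsum k α x (t+1) = 0 := by
    intro t ht
    have a0 : Fin (α (2*t+1)) := ⟨0, hα _ (by omega)⟩
    have h := hm (2*t+1) (by omega) a0
    have hodd : Odd (2*t+1) := ⟨t, by ring⟩
    have hne : ¬ Even (2*t+1) := by rw [Nat.even_iff]; omega
    rw [if_pos hodd, if_neg hne, show (2*t+1+1)/2 = t+1 from by omega] at h
    linarith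
  have hEp : ∀ t, t < k → ∀ (hj : 2*t < 2*k) (a : Fin (α (2*t))),
      x ⟨⟨2*t, hj⟩, a⟩ = csum k α x (2*t) + qsum k α x t := by
    intro t ht hj a
    have h := hm (2*t) hj a
    have heven : Even (2*t) := ⟨t, by ring⟩
    have hno : ¬ Odd (2*t) := by rw [Nat.odd_iff]; omega
    rw [if_pos heven, if_neg hno, show (2*t+1)/2 = t from by omega] at h
    linarith
  have hE : ∀ t, t < k →
      csum k α x (2*t) = (α (2*t) : ℝ) * (csum k α x (2*t) + qsum k α x t) := by
    intro t ht
    calc csum k α x (2*t) = ∑ b : Fin (α (2*t)), x ⟨⟨2*t, by omega⟩, b⟩ := by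
          rw [csum, dif_pos (by omega : 2*t < 2*k)]
      _ = ∑ _b : Fin (α (2*t)), (csum k α x (2*t) + qsum k α x t) :=
          Finset.sum_congr rfl fun b _ => hEp t ht (by omega) b
      _ = (α (2*t) : ℝ) * (csum k α x (2*t) + qsum k α x t) := by
          rw [Finset.sum_const, Finset.card_univ, Fintype.card_fin, nsmul_eq_mul]
  have hqd : ∀ t, t < k → qsum k α x t = csum k α x (2*t+1) + qsum k α x (t+1) := by
    intro t ht
    rw [qsum, Finset.sum_eq_sum_Ico_succ_bot ht]
    rfl
  have hqk : qsum k α x k = 0 := by rw [qsum, Finset.Ico_self, Finset.sum_empty]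
  have hps : ∀ t : ℕ, psum k α x (2*t+3) =
      psum k α x (2*t+1) + csum k α x (2*t+1) + csum k α x (2*t+2) := by
    intro t
    rw [psum, show 2*t+3 = (2*t+2)+1 from rfl, Finset.sum_range_succ,
      show 2*t+2 = (2*t+1)+1 from rfl, Finset.sum_range_succ]
    rfl
  have hp1 : psum k α x 1 = csum k α x 0 := by rw [psum, Finset.sum_range_one]
  have he0 : csum k α x 0 + qsum k α x 1 = 0 := by
    have h := hO 0 hk
    rw [show 2*0+1 = 1 from rfl, hp1] at h
    linarith [h]
  have hαR : ∀ i, i < 2*k → (1:ℝ) ≤ (α i : ℝ) := by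
    intro i hi
    exact_mod_cast hα i hi
  have herec : ∀ t, t+1 < k → csum k α x (2*t+2) =
      2*qsum k α x (t+1) - qsum k α x t - qsum k α x (t+2) := by
    intro t ht
    have h1 := hO t (by omega)
    have h2 := hO (t+1) ht
    rw [show 2*(t+1)+1 = 2*t+3 from by ring] at h2
    have h3 := hps t
    have h4 := hqd t (by omega)
    linarith
  have hqlin : ∀ t, t < k → ∃ c : ℝ, 0 ≤ c ∧ c < 1 ∧
      qsum k α x t = c * qsum k α x (t+1) := by
    intro t
    induction t with
    | zero =>
      intro h0
      have hE0 := hE 0 h0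
      rw [show 2*0 = 0 from rfl] at hE0
      have hA : (1:ℝ) ≤ (α 0 : ℝ) := hαR 0 (by omega)
      have hcs : csum k α x 0 = -qsum k α x 1 := by linarith
      rw [hcs] at hE0
      have key : (α 0 : ℝ) * qsum k α x 0 = ((α 0:ℝ) - 1) * qsum k α x 1 := by
        linear_combination -hE0
      refine ⟨((α 0 : ℝ) - 1)/(α 0 : ℝ), div_nonneg (by linarith) (by linarith), ?_, ?_⟩
      · rw [div_lt_one (by linarith)]; linarith
      · rw [eq_comm, div_mul_eq_mul_div, div_eq_iff (by linarith : (α 0:ℝ) ≠ 0)]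
        linear_combination -key
    | succ t IH =>
      intro hsk
      obtain ⟨c, hc0, hc1, hq⟩ := IH (by omega)
      have hE1 := hE (t+1) hsk
      rw [show 2*(t+1) = 2*t+2 from by ring] at hE1
      have hrec := herec t hsk
      set a : ℝ := (α (2*t+2) : ℝ) with ha_def
      have ha : 1 ≤ a := hαR (2*t+2) (by omega)
      rw [hrec, hq] at hE1
      set D : ℝ := a*(3 - c) - (2 - c) with hD_def
      have hD1 : (1:ℝ) ≤ D := by nlinarith
      have hkey : D * qsum k α x (t+1) = (a - 1) * qsum k α x (t+2) := by
        linear_combination -hE1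
      refine ⟨(a-1)/D, div_nonneg (by linarith) (by linarith), ?_, ?_⟩
      · rw [div_lt_one (by linarith)]; nlinarith
      · rw [eq_comm, div_mul_eq_mul_div, div_eq_iff (by linarith : D ≠ 0)]
        linear_combination -hkey
  have hq0 : ∀ t, t ≤ k → qsum k α x t = 0 := by
    have haux : ∀ d t, t + d = k → qsum k α x t = 0 := by
      intro d
      induction d with
      | zero =>
        intro t ht
        have : t = k := by omega
        rw [this, hqk]
      | succ d IH =>
        intro t ht
        obtain ⟨c, -, -, hq⟩ := hqlin t (by omega)
        rw [hq, IH (t+1) (by omega), mul_zero]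
    intro t ht
    exact haux (k - t) t (by omega)
  have hcodd : ∀ t, t < k → csum k α x (2*t+1) = 0 := by
    intro t ht
    have h := hqd t ht
    rw [hq0 t (by omega), hq0 (t+1) (by omega)] at h
    linarith
  have hceven : ∀ t, t < k → csum k α x (2*t) = 0 := by
    intro t ht
    cases t with
    | zero =>
      rw [show 2*0 = 0 from rfl]
      have := hq0 1 (by omega)
      linarith
    | succ u =>
      have h := herec u ht
      rw [show 2*(u+1) = 2*u+2 from by ring, h, hq0 u (by omega), hq0 (u+1) (by omega),
        hq0 (u+2) (by omega)]
      ring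
  constructor
  · intro j hj hEj a
    obtain ⟨t, rfl⟩ : ∃ t, j = 2*t := by
      rcases hEj with ⟨r, hr⟩
      exact ⟨r, by omega⟩
    have ht : t < k := by omega
    have h := hEp t ht hj a
    rw [hceven t ht, hq0 t (by omega)] at h
    simpa using h
  · intro j hj hOj
    obtain ⟨t, rfl⟩ : ∃ t, j = 2*t+1 := by
      rcases hOj with ⟨r, hr⟩
      exact ⟨r, by omega⟩
    exact hcodd t (by omega)
noncomputable def phiMap (k : ℕ) (α : ℕ → ℕ) :
    ((Σ j : Fin (2*k), Fin (α j.val)) → ℝ) →ₗ[ℝ]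
      ((Σ t : Fin k, Fin (α (2*t.val))) → ℝ) × (Fin k → ℝ) :=
  LinearMap.prod
    (LinearMap.funLeft ℝ ℝ (fun p => ⟨⟨2*p.1.val, by have := p.1.isLt; omega⟩, p.2⟩))
    (LinearMap.pi (fun t => ∑ b : Fin (α (2*t.val+1)),
        LinearMap.proj (R := ℝ)
          (⟨⟨2*t.val+1, by have := t.isLt; omega⟩, b⟩ : Σ j : Fin (2*k), Fin (α j.val))))

lemma phiMap_apply_snd (k : ℕ) (α : ℕ → ℕ) (x : (Σ j : Fin (2*k), Fin (α j.val)) → ℝ)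
    (t : Fin k) :
    (phiMap k α x).2 t = ∑ b : Fin (α (2*t.val+1)),
      x ⟨⟨2*t.val+1, by have := t.isLt; omega⟩, b⟩ := by
  show (LinearMap.pi _) x t = _
  rw [LinearMap.pi_apply, LinearMap.sum_apply]
  rfl

lemma ker_eq_ker_phi (k : ℕ) (hk : 1 ≤ k) (α : ℕ → ℕ) (hα : ∀ i < 2 * k, 0 < α i) :
    LinearMap.ker (Matrix.mulVecLin (adjMat (cographC α (2*k)))) =
      LinearMap.ker (phiMap k α) := by
  ext x
  simp only [LinearMap.mem_ker, Matrix.mulVecLin_apply]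
  constructor
  · intro hx
    obtain ⟨hev, hod⟩ := ker_structure k hk α hα x hx
    rw [Prod.ext_iff]
    constructor
    · funext p
      exact hev (2*p.1.val) (by have := p.1.isLt; omega) ⟨p.1.val, by ring⟩ p.2
    · funext t
      rw [phiMap_apply_snd]
      have h := hod (2*t.val+1) (by have := t.isLt; omega) ⟨t.val, by ring⟩
      rw [csum, dif_pos (show 2*t.val+1 < 2*k by have := t.isLt; omega)] at h
      exact h
  · intro hphi
    have h1 : ∀ p : Σ t : Fin k, Fin (α (2*t.val)),
        x ⟨⟨2*p.1.val, by have := p.1.isLt; omega⟩, p.2⟩ = 0 :=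
      fun p => congrFun (congrArg Prod.fst hphi) p
    have h2 : ∀ t : Fin k, (∑ b : Fin (α (2*t.val+1)),
        x ⟨⟨2*t.val+1, by have := t.isLt; omega⟩, b⟩) = 0 := by
      intro t
      have h := congrFun (congrArg Prod.snd hphi) t
      rw [phiMap_apply_snd] at h
      exact h
    have hcall : ∀ i, csum k α x i = 0 := by
      intro i
      by_cases hi : i < 2*k
      · rcases Nat.even_or_odd i with ⟨t, ht⟩ | ⟨t, ht⟩
        · have ht2 : i = 2*t := by omega
          subst ht2
          rw [csum, dif_pos hi]
          exact Finset.sum_eq_zero fun b _ => h1 ⟨⟨t, by omega⟩, b⟩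
        · have ht2 : i = 2*t+1 := by omega
          subst ht2
          rw [csum, dif_pos hi]
          exact h2 ⟨t, by omega⟩
      · rw [csum, dif_neg hi]
    funext v
    obtain ⟨⟨j, hj⟩, a⟩ := v
    have hp0 : psum k α x j = 0 := Finset.sum_eq_zero fun i _ => hcall i
    have hq0 : qsum k α x ((j+1)/2) = 0 := Finset.sum_eq_zero fun l _ => hcall (2*l+1)
    show (adjMat (cographC α (2*k)) *ᵥ x) ⟨⟨j, hj⟩, a⟩ = 0
    rw [master k α x j hj a, hp0, hq0]
    rcases Nat.even_or_odd j with hev | hod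
    · obtain ⟨t, rfl⟩ : ∃ t, j = 2*t := by rcases hev with ⟨r, hr⟩; exact ⟨r, by omega⟩
      have hno : ¬ Odd (2*t) := by rw [Nat.odd_iff]; omega
      have hxa : x ⟨⟨2*t, hj⟩, a⟩ = 0 := h1 ⟨⟨t, by omega⟩, a⟩
      rw [if_neg hno, if_pos hev, hcall (2*t), hxa]
      norm_num
    · have hne : ¬ Even j := by rw [Nat.even_iff]; rcases hod with ⟨r, hr⟩; omega
      rw [if_pos hod, if_neg hne]
      norm_num
noncomputable def buildX (k : ℕ) (α : ℕ → ℕ)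
    (y : (Σ t : Fin k, Fin (α (2*t.val))) → ℝ) (z : Fin k → ℝ) :
    (Σ j : Fin (2*k), Fin (α j.val)) → ℝ := fun v =>
  if h : v.1.val % 2 = 0 then
    y ⟨⟨v.1.val/2, by have := v.1.isLt; omega⟩,
       Fin.cast (congrArg α (by omega : v.1.val = 2*(v.1.val/2))) v.2⟩
  else if v.2.val = 0 then z ⟨v.1.val/2, by have := v.1.isLt; omega⟩ else 0

lemma buildX_even (k : ℕ) (α : ℕ → ℕ) (y : (Σ t : Fin k, Fin (α (2*t.val))) → ℝ)
    (z : Fin k → ℝ) (t : Fin k) (pf : 2*t.val < 2*k) (b : Fin (α (2*t.val))) :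
    buildX k α y z ⟨⟨2*t.val, pf⟩, b⟩ = y ⟨t, b⟩ := by
  unfold buildX
  rw [dif_pos (show (2*t.val) % 2 = 0 by omega)]
  refine congrArg y ((sigmaFin_eq_iff (β := fun n => α (2*n)) _ _).mpr ⟨?_, ?_⟩)
  · show (2*t.val)/2 = t.val
    omega
  · rfl

lemma buildX_odd (k : ℕ) (α : ℕ → ℕ) (y : (Σ t : Fin k, Fin (α (2*t.val))) → ℝ)
    (z : Fin k → ℝ) (t : Fin k) (pf : 2*t.val+1 < 2*k) (b : Fin (α (2*t.val+1))) :
    buildX k α y z ⟨⟨2*t.val+1, pf⟩, b⟩ = if b.val = 0 then z t else 0 := by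
  unfold buildX
  rw [dif_neg (show ¬ (2*t.val+1) % 2 = 0 by omega)]
  by_cases hb : b.val = 0
  · rw [if_pos hb, if_pos hb]
    refine congrArg z (Fin.ext ?_)
    show (2*t.val+1)/2 = t.val
    omega
  · rw [if_neg hb, if_neg hb]

lemma phiMap_surjective (k : ℕ) (α : ℕ → ℕ) (hα : ∀ i < 2 * k, 0 < α i) :
    Function.Surjective (phiMap k α) := by
  rintro ⟨y, z⟩
  refine ⟨buildX k α y z, Prod.ext ?_ ?_⟩
  · funext p
    show buildX k α y z ⟨⟨2*p.1.val, _⟩, p.2⟩ = y p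
    rw [buildX_even]
  · funext t
    rw [phiMap_apply_snd]
    have hpos : 0 < α (2*t.val+1) := hα _ (by have := t.isLt; omega)
    show (∑ b : Fin (α (2*t.val+1)), buildX k α y z ⟨⟨2*t.val+1, _⟩, b⟩) = z t
    rw [Finset.sum_congr rfl fun b _ => buildX_odd k α y z t (by have := t.isLt; omega) b]
    have : ∀ b : Fin (α (2*t.val+1)), (if b.val = 0 then z t else 0) =
        (if b = (⟨0, hpos⟩ : Fin (α (2*t.val+1))) then z t else 0) :=
      fun b => if_congr (by rw [Fin.ext_iff]) rfl rfl
    rw [Finset.sum_congr rfl fun b _ => this b,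
      Finset.sum_ite_eq' Finset.univ (⟨0, hpos⟩ : Fin (α (2*t.val+1))) (fun _ => z t),
      if_pos (Finset.mem_univ _)]

lemma sum_range_even_odd (f : ℕ → ℕ) (k : ℕ) :
    ∑ j ∈ Finset.range (2*k), f j =
      ∑ t ∈ Finset.range k, f (2*t) + ∑ t ∈ Finset.range k, f (2*t+1) := by
  induction k with
  | zero => simp
  | succ k IH =>
    rw [show 2*(k+1) = (2*k+1)+1 from by ring, Finset.sum_range_succ, Finset.sum_range_succ,
      Finset.sum_range_succ (fun t => f (2*t)) k, Finset.sum_range_succ (fun t => f (2*t+1)) k]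
    omega

lemma finrank_ker_eq (k : ℕ) (hk : 1 ≤ k) (α : ℕ → ℕ) (hα : ∀ i < 2 * k, 0 < α i) :
    Module.finrank ℝ (LinearMap.ker (Matrix.mulVecLin (adjMat (cographC α (2*k)))))
      = (∑ t ∈ Finset.range k, α (2*t+1)) - k := by
  have hrn := LinearMap.finrank_range_add_finrank_ker (phiMap k α)
  rw [LinearMap.range_eq_top_of_surjective _ (phiMap_surjective k α hα), finrank_top] at hrn
  rw [ker_eq_ker_phi k hk α hα]
  have hdom : Module.finrank ℝ ((Σ j : Fin (2*k), Fin (α j.val)) → ℝ)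
      = ∑ j ∈ Finset.range (2*k), α j := by
    rw [Module.finrank_fintype_fun_eq_card, Fintype.card_sigma]
    rw [← Fin.sum_univ_eq_sum_range (fun j => α j) (2*k)]
    exact Finset.sum_congr rfl fun i _ => Fintype.card_fin _
  have hcod : Module.finrank ℝ (((Σ t : Fin k, Fin (α (2*t.val))) → ℝ) × (Fin k → ℝ))
      = (∑ t ∈ Finset.range k, α (2*t)) + k := by
    rw [Module.finrank_prod, Module.finrank_fintype_fun_eq_card,
      Module.finrank_fintype_fun_eq_card, Fintype.card_sigma, Fintype.card_fin]
    congr 1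
    rw [← Fin.sum_univ_eq_sum_range (fun t => α (2*t)) k]
    exact Finset.sum_congr rfl fun i _ => Fintype.card_fin _
  rw [hdom, hcod, sum_range_even_odd α k] at hrn
  have hge : k ≤ ∑ t ∈ Finset.range k, α (2*t+1) := by
    calc k = ∑ _t ∈ Finset.range k, 1 := by simp
    _ ≤ ∑ t ∈ Finset.range k, α (2*t+1) :=
      Finset.sum_le_sum fun i hi => hα (2*i+1) (by rw [Finset.mem_range] at hi; omega)
  omega

lemma adjMat_cograph_transpose (k : ℕ) (α : ℕ → ℕ) :
    (adjMat (cographC α (2*k)))ᵀ = adjMat (cographC α (2*k)) := by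
  ext u v
  show (if (cographC α (2*k)).Adj v u then (1:ℝ) else 0)
    = (if (cographC α (2*k)).Adj u v then (1:ℝ) else 0)
  exact if_congr (SimpleGraph.adj_comm _ _ _) rfl rfl


/-- the multiplicity of the eigenvalue `0` of the adjacency matrix of
`G = C(α_1,…,α_{2k})` equals `∑_{i=1}^k α_{2i} - k`. (Paper's `α_{2i}` is `α (2*i+1)` in our
0-based indexing, `i = 0,…,k-1`.) -/
theorem stmt11 (k : ℕ) (hk : 1 ≤ k) (α : ℕ → ℕ) (hα : ∀ i < 2 * k, 0 < α i) :
    (adjMat (cographC α (2 * k))).charpoly.rootMultiplicity 0 =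
      (∑ i ∈ Finset.range k, α (2 * i + 1)) - k := by
  set A := adjMat (cographC α (2*k)) with hA
  set φ := Matrix.mulVecLin A with hφ
  have htm : LinearMap.toMatrix' φ = A := by
    rw [hφ, ← Matrix.toLin'_apply', LinearMap.toMatrix'_toLin']
  have hchar : A.charpoly = φ.charpoly := by
    have h2 := LinearMap.charpoly_toMatrix φ (Pi.basisFun ℝ (Σ j : Fin (2*k), Fin (α j.val)))
    rw [LinearMap.toMatrix_eq_toMatrix', htm] at h2
    exact h2
  -- symmetric matrix: generalized kernel = kernel
  have hsym : ∀ y : (Σ j : Fin (2*k), Fin (α j.val)) → ℝ, A *ᵥ (A *ᵥ y) = 0 → A *ᵥ y = 0 := by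
    intro y h
    have hdp : (A *ᵥ y) ⬝ᵥ (A *ᵥ y) = 0 := by
      rw [dotProduct_mulVec, ← Matrix.mulVec_transpose, adjMat_cograph_transpose, h,
        zero_dotProduct]
    exact dotProduct_self_eq_zero.mp hdp
  have hpow : ∀ (n : ℕ) (y : (Σ j : Fin (2*k), Fin (α j.val)) → ℝ),
      (φ ^ n) y = 0 → φ y = 0 := by
    intro n
    induction n with
    | zero =>
      intro y hy
      rw [pow_zero, Module.End.one_apply] at hy
      rw [hy, map_zero]
    | succ n IH =>
      intro y hy
      rw [pow_succ, Module.End.mul_apply] at hy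
      have h2 : φ (φ y) = 0 := IH (φ y) hy
      exact hsym y h2
  have hmax : (Module.End.maxGenEigenspace φ 0) = LinearMap.ker φ := by
    ext m
    rw [Module.End.mem_maxGenEigenspace, LinearMap.mem_ker]
    constructor
    · rintro ⟨n, hn⟩
      rw [zero_smul, sub_zero] at hn
      exact hpow n m hn
    · intro hm
      exact ⟨1, by rw [zero_smul, sub_zero, pow_one]; exact hm⟩
  rw [hchar, Polynomial.rootMultiplicity_eq_natTrailingDegree',
    ← LinearMap.finrank_maxGenEigenspace_zero_eq, hmax, finrank_ker_eq k hk α hα]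
end

section
/- Let n ≥ 2 and let H_n be the antiregular graph on n vertices with adjacency matrix A_n. Then every eigenvalue λ of A_n with λ < −1 satisfies λ < (−1−√2)/2, and every eigenvalue λ of A_n with λ > 0 satisfies λ > (−1+√2)/2. Equivalently, the closed interval [(−1−√2)/2, (−1+√2)/2] contains no eigenvalue of A_n other than possibly 0 and −1. -/
open Matrix BigOperators
open scoped Classical

lemma sigma_eq_iff {α : ℕ → ℕ} {m : ℕ} (x y : Σ j : Fin m, Fin (α j.val)) :
    x = y ↔ (x.1.val = y.1.val ∧ HEq x.2 y.2) := by
  constructor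
  · rintro rfl; exact ⟨rfl, HEq.rfl⟩
  · rcases x with ⟨⟨jx, hx⟩, ax⟩
    rcases y with ⟨⟨jy, hy⟩, ay⟩
    rintro ⟨h1, h2⟩
    dsimp only at h1
    subst h1
    have h3 := eq_of_heq h2
    subst h3
    rfl

lemma cograph_adj (α : ℕ → ℕ) : ∀ (m : ℕ) (x y : Σ j : Fin m, Fin (α j.val)),
    (cographC α m).Adj x y ↔ x ≠ y ∧
      ((x.1.val = y.1.val ∧ (m + x.1.val) % 2 = 0) ∨
       (x.1.val ≠ y.1.val ∧ (m + max x.1.val y.1.val) % 2 = 1)) := by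
  intro m
  induction m with
  | zero => exact fun x => x.1.elim0
  | succ m ih =>
    rintro ⟨⟨jx, hjx⟩, ax⟩ ⟨⟨jy, hjy⟩, ay⟩
    show (SimpleGraph.comap _ _).Adj _ _ ↔ _
    rw [SimpleGraph.comap_adj, SimpleGraph.compl_adj]
    have e1 : ((⟨⟨jx, hjx⟩, ax⟩ : Σ j : Fin (m+1), Fin (α j.val)) = ⟨⟨jy, hjy⟩, ay⟩)
        ↔ (jx = jy ∧ HEq ax ay) := by rw [sigma_eq_iff]
    by_cases hx : jx < m <;> by_cases hy : jy < m
    · -- both old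
      simp only [splitLast, Equiv.coe_fn_mk, dif_pos hx, dif_pos hy]
      have e2 : ((⟨⟨jx, hx⟩, ax⟩ : Σ j : Fin m, Fin (α j.val)) = ⟨⟨jy, hy⟩, ay⟩)
          ↔ (jx = jy ∧ HEq ax ay) := by rw [sigma_eq_iff]
      have hadj : ((cographC α m ⊕g (⊤ : SimpleGraph (Fin (α m)))).Adj
          (Sum.inl ⟨⟨jx, hx⟩, ax⟩) (Sum.inl ⟨⟨jy, hy⟩, ay⟩)) ↔
          (cographC α m).Adj ⟨⟨jx, hx⟩, ax⟩ ⟨⟨jy, hy⟩, ay⟩ := by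
        simp [SimpleGraph.sum]
      have hih := ih ⟨⟨jx, hx⟩, ax⟩ ⟨⟨jy, hy⟩, ay⟩
      dsimp only at hih
      rw [ne_eq, e2] at hih
      constructor
      · rintro ⟨hne, hnadj⟩
        have hne2 : ¬(jx = jy ∧ HEq ax ay) := fun hh => hne (congrArg Sum.inl (e2.mpr hh))
        refine ⟨fun hh => hne2 (e1.mp hh), ?_⟩
        have hC : ¬((jx = jy ∧ (m + jx) % 2 = 0) ∨ (¬jx = jy ∧ (m + max jx jy) % 2 = 1)) := by
          intro hC
          exact hnadj (hadj.mpr (hih.mpr ⟨hne2, hC⟩))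
        by_cases hj : jx = jy
        · exact Or.inl ⟨hj, by have := fun h => hC (Or.inl ⟨hj, h⟩); omega⟩
        · exact Or.inr ⟨hj, by have := fun h => hC (Or.inr ⟨hj, h⟩); omega⟩
      · rintro ⟨hne, hC⟩
        have hne2 : ¬(jx = jy ∧ HEq ax ay) := fun hh => hne (e1.mpr hh)
        refine ⟨fun hh => hne2 (e2.mp (Sum.inl.inj hh)), ?_⟩
        intro hAdj
        rcases (hih.mp (hadj.mp hAdj)).2 with ⟨hj, hp⟩ | ⟨hj, hp⟩
        · rcases hC with ⟨-, hp'⟩ | ⟨hj', -⟩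
          · omega
          · exact hj' hj
        · rcases hC with ⟨hj', -⟩ | ⟨-, hp'⟩
          · exact hj hj'
          · omega
    · -- jx old, jy new (jy = m)
      simp only [splitLast, Equiv.coe_fn_mk, dif_pos hx, dif_neg hy]
      constructor
      · intro _
        exact ⟨fun hh => absurd (e1.mp hh).1 (by omega), Or.inr ⟨by omega, by omega⟩⟩
      · intro _
        exact ⟨by simp, by simp [SimpleGraph.sum]⟩
    · -- jx new, jy old
      simp only [splitLast, Equiv.coe_fn_mk, dif_neg hx, dif_pos hy]
      constructor
      · intro _
        exact ⟨fun hh => absurd (e1.mp hh).1 (by omega), Or.inr ⟨by omega, by omega⟩⟩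
      · intro _
        exact ⟨by simp, by simp [SimpleGraph.sum]⟩
    · -- both new
      simp only [splitLast, Equiv.coe_fn_mk, dif_neg hx, dif_neg hy]
      constructor
      · rintro ⟨h1, h2⟩
        simp only [SimpleGraph.sum] at h2
        simp only [ne_eq, SimpleGraph.top_adj, not_not] at h2
        exact absurd (by rw [h2]) h1
      · rintro ⟨-, (⟨-, hp⟩ | ⟨hj, -⟩)⟩
        · exact absurd hp (by omega)
        · exact absurd (show jx = jy by omega) hj

open Finset

noncomputable def AuxA (c : ℕ → ℝ) (k t : ℕ) : ℝ := ∑ s ∈ Finset.Ico t k, c (2*s+1)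
noncomputable def AuxB (c : ℕ → ℝ) (t : ℕ) : ℝ := ∑ j ∈ Finset.range (2*t+1), c j

lemma sum_range_ite_lt (f : ℕ → ℝ) (L M : ℕ) (h : L ≤ M) :
    ∑ j ∈ Finset.range M, (if j < L then f j else 0) = ∑ j ∈ Finset.range L, f j := by
  rw [← Finset.sum_filter]
  congr 1
  ext j
  simp only [Finset.mem_filter, Finset.mem_range]
  omega

lemma sum_range_ite_odd (f : ℕ → ℝ) (k t : ℕ) :
    ∑ j ∈ Finset.range (2*k), (if 2*t < j ∧ j % 2 = 1 then f j else 0)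
      = ∑ s ∈ Finset.Ico t k, f (2*s+1) := by
  induction k with
  | zero => simp
  | succ k ih =>
    have h1 : 2*(k+1) = (2*k) + 1 + 1 := by ring
    rw [h1, Finset.sum_range_succ, Finset.sum_range_succ, ih]
    by_cases ht : t ≤ k
    · rw [Finset.sum_Ico_succ_top ht]
      have c1 : ¬(2*t < 2*k ∧ (2*k) % 2 = 1) := by omega
      have c2 : (2*t < 2*k+1 ∧ (2*k+1) % 2 = 1) := by omega
      rw [if_neg c1, if_pos c2]
      ring
    · have he : Finset.Ico t (k+1) = ∅ := by
        rw [Finset.Ico_eq_empty_iff]; omega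
      have he2 : Finset.Ico t k = ∅ := by
        rw [Finset.Ico_eq_empty_iff]; omega
      rw [he, he2]
      have c1 : ¬(2*t < 2*k ∧ (2*k) % 2 = 1) := by omega
      have c2 : ¬(2*t < 2*k+1 ∧ (2*k+1) % 2 = 1) := by omega
      rw [if_neg c1, if_neg c2]
      simp


lemma keyIneq (lam d : ℝ) (hd : d = 1 ∨ d = 2) (h1 : lam + 1 ≠ 0)
    (hgap : 4*lam^2 + 4*lam - 1 ≤ 0) :
    ((lam^2+lam-1)*(lam^2-d) - (lam^2+lam)*(lam+d))^2 > ((lam^2+lam)*(lam^2-d))^2 := by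
  have h1' : (lam+1)^2 > 0 := by positivity
  rcases hd with rfl | rfl
  · have hf1 : 1 - 2*lam - lam^2 > 0 := by nlinarith [sq_nonneg (2*lam+1), sq_nonneg lam]
    have hf2 : 2*lam^3 - lam^2 - 4*lam + 1 > 0 := by
      nlinarith [sq_nonneg (2*lam+1), sq_nonneg lam, sq_nonneg (lam+1), sq_nonneg (lam-1)]
    nlinarith [mul_pos hf1 hf2, mul_pos h1' (mul_pos hf1 hf2)]
  · have hf1 : -lam^3 - 4*lam^2 - 2*lam + 2 > 0 := by
      nlinarith [sq_nonneg (2*lam+1), sq_nonneg lam, sq_nonneg (lam+1)]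
    have hf2 : 2*lam^4 + lam^3 - 8*lam^2 - 6*lam + 2 > 0 := by
      nlinarith [sq_nonneg (2*lam+1), sq_nonneg lam, sq_nonneg (lam+1), sq_nonneg (lam-1),
        sq_nonneg (lam^2+lam), sq_nonneg (2*lam^2+2*lam-1), sq_nonneg ((2*lam+1)^2-2)]
    nlinarith [mul_pos hf1 hf2]

lemma lamsq_ne (lam d : ℝ) (hd : d = 1 ∨ d = 2) (h1 : lam + 1 ≠ 0)
    (hgap : 4*lam^2 + 4*lam - 1 ≤ 0) : lam^2 - d ≠ 0 := by
  rcases hd with rfl | rfl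
  · intro h
    have h2 : (lam - 1) * (lam + 1) = 0 := by nlinarith [h]
    rcases mul_eq_zero.mp h2 with h3 | h3
    · nlinarith
    · exact h1 h3
  · intro h
    nlinarith [sq_nonneg (2*lam+1)]


lemma inv_step_neg (q Et Et1 Et2 a2 : ℝ) (hq : q < 0) (hr : q*Et = (2*q-1)*Et1 - q*Et2)
    (ih1 : Et1 ≥ Et2) (ih2 : Et1 ≥ a2) (ha : 0 < a2) : Et ≥ Et1 := by
  have hp : q * (Et1 - Et2) ≤ 0 :=
    mul_nonpos_of_nonpos_of_nonneg (le_of_lt hq) (by linarith)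
  have hid : q * Et - q * Et1 = -Et1 + q * (Et1 - Et2) := by linear_combination hr
  have h2 : q * Et ≤ q * Et1 := by linarith
  by_contra hcon
  push_neg at hcon
  have := mul_lt_mul_of_neg_left hcon hq
  linarith

lemma inv_step_pos (q Et Et1 Et2 a2 : ℝ) (hq : 0 < q) (hq4 : 4*q ≤ 1)
    (hr : q*Et = -((2*q-1)*Et1) - q*Et2)
    (ih1 : Et1 ≥ Et2) (ih2 : Et1 ≥ a2) (ha : 0 < a2) : Et ≥ Et1 := by
  have hp : 0 ≤ q * (Et1 - Et2) := mul_nonneg (le_of_lt hq) (by linarith)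
  have hp2 : 0 ≤ (1 - 4*q) * Et1 := mul_nonneg (by linarith) (by linarith)
  have hid : q * Et - q * Et1 = (1 - 4*q) * Et1 + q * (Et1 - Et2) := by linear_combination hr
  have h2 : q * Et1 ≤ q * Et := by linarith
  exact le_of_mul_le_mul_left h2 hq

lemma final_contra (Nv Pv E1 E2 a2 : ℝ) (hkey : Nv^2 > Pv^2)
    (hsq : Pv^2 * E2^2 = Nv^2 * E1^2)
    (h12 : E2 ≤ E1) (h2A : a2 ≤ E2) (hpos : 0 < a2) : False := by
  have hE2pos : 0 < E2 := lt_of_lt_of_le hpos h2A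
  have hE1pos : 0 < E1 := lt_of_lt_of_le hE2pos h12
  have h6 : E2^2 ≤ E1^2 := by nlinarith
  have h7 : Pv^2 * E2^2 ≤ Pv^2 * E1^2 := mul_le_mul_of_nonneg_left h6 (sq_nonneg Pv)
  have h8 : 0 < (Nv^2 - Pv^2) * E1^2 := mul_pos (sub_pos.mpr hkey) (pow_pos hE1pos 2)
  nlinarith [h7, h8]

lemma core (k : ℕ) (hk : 1 ≤ k) (lam d : ℝ) (hd : d = 1 ∨ d = 2)
    (h0 : lam ≠ 0) (h1 : lam + 1 ≠ 0) (hgap : 4*lam^2 + 4*lam - 1 ≤ 0)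
    (c : ℕ → ℝ)
    (hEe : ∀ t < k, lam * c (2*t) = AuxA c k t)
    (hEo1 : lam * c 1 = d * (AuxA c k 1 + c 0))
    (hEo : ∀ t, 1 ≤ t → t < k → lam * c (2*t+1) = AuxA c k (t+1) + AuxB c t) :
    ∀ j < 2*k, c j = 0 := by
  set q : ℝ := lam^2 + lam with hqdef
  have hq0 : q ≠ 0 := by
    intro h
    rcases mul_eq_zero.mp (show lam * (lam+1) = 0 by linear_combination h) with h2 | h2
    exacts [h0 h2, h1 h2]
  have hq4 : 4*q ≤ 1 := by rw [hqdef]; linarith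
  have hqm : -(1:ℝ)/4 ≤ q := by rw [hqdef]; nlinarith [sq_nonneg (2*lam+1)]
  set A : ℕ → ℝ := AuxA c k with hAdef
  set B : ℕ → ℝ := AuxB c with hBdef
  have hAk : ∀ t, k ≤ t → A t = 0 := by
    intro t ht
    rw [hAdef]
    unfold AuxA
    rw [Finset.Ico_eq_empty_iff.mpr (by omega)]
    simp
  have hAstep : ∀ t, t < k → A t = c (2*t+1) + A (t+1) := by
    intro t ht
    rw [hAdef]
    unfold AuxA
    rw [Finset.sum_eq_sum_Ico_succ_bot ht]
  have hBstep : ∀ t, B (t+1) = B t + c (2*t+1) + c (2*t+2) := by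
    intro t
    rw [hBdef]
    unfold AuxB
    rw [show 2*(t+1)+1 = (2*t+1) + 1 + 1 by ring, Finset.sum_range_succ, Finset.sum_range_succ]
  have hB0 : B 0 = c 0 := by rw [hBdef]; unfold AuxB; simp
  -- the three-term recurrence
  have star : ∀ t, 1 ≤ t → t + 2 ≤ k → q * (A t + A (t+2)) = (2*q - 1) * A (t+1) := by
    intro t ht htk
    have e1 : lam * c (2*t+1) = A (t+1) + B t := hEo t ht (by omega)
    have e2 : lam * c (2*t+3) = A (t+2) + B (t+1) := by
      have := hEo (t+1) (by omega) (by omega)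
      rwa [show 2*(t+1)+1 = 2*t+3 by ring] at this
    have e3 : lam * c (2*t+2) = A (t+1) := by
      have := hEe (t+1) (by omega)
      rwa [show 2*(t+1) = 2*t+2 by ring] at this
    have e4 : A t = c (2*t+1) + A (t+1) := hAstep t (by omega)
    have e5 : A (t+1) = c (2*t+3) + A (t+2) := by
      have := hAstep (t+1) (by omega)
      rwa [show 2*(t+1)+1 = 2*t+3 by ring] at this
    have e6 : B (t+1) = B t + c (2*t+1) + c (2*t+2) := hBstep t
    rw [hqdef]
    linear_combination lam*e1 - lam*e2 - lam*e6 - e3 - lam^2*e5 + (lam^2+lam)*e4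
  have hIC1 : (lam^2 - d) * A 0 = lam*(lam+d) * A 1 := by
    have e0 : lam * c 0 = A 0 := by
      have := hEe 0 hk
      rwa [show 2*0 = 0 by ring] at this
    have e1 : lam * c 1 = d * (A 1 + c 0) := hEo1
    have e4 : A 0 = c 1 + A 1 := by
      have := hAstep 0 hk
      rwa [show 2*0+1 = 1 by ring] at this
    linear_combination lam*e1 + d*e0 + lam^2*e4
  have hd2 : lam^2 - d ≠ 0 := lamsq_ne lam d hd h1 hgap
  -- main claim: A vanishes everywhere
  have hAll : ∀ t, A t = 0 := by
    by_cases hA : A (k-1) = 0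
    · have down : ∀ s t, 1 ≤ t → k ≤ t + s → A t = 0 := by
        intro s
        induction s with
        | zero => intro t ht htk; exact hAk t (by omega)
        | succ s ih =>
          intro t ht htk
          by_cases h : k ≤ t
          · exact hAk t h
          · by_cases h2 : t = k - 1
            · rw [h2]; exact hA
            · have hst := star t ht (by omega)
              have z1 : A (t+1) = 0 := ih (t+1) (by omega) (by omega)
              have z2 : A (t+2) = 0 := by
                by_cases hh : k ≤ t+2
                · exact hAk _ hh
                · exact ih (t+2) (by omega) (by omega)
              rw [z1, z2] at hst
              have hz : q * A t = 0 := by linarith [hst]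
              exact (mul_eq_zero.mp hz).resolve_left hq0
      have hA1 : A 1 = 0 := down k 1 le_rfl (by omega)
      have hA0 : A 0 = 0 := by
        have h := hIC1
        rw [hA1, mul_zero] at h
        exact (mul_eq_zero.mp h).resolve_left hd2
      intro t
      rcases Nat.eq_zero_or_pos t with rfl | ht
      · exact hA0
      · exact down k t ht (by omega)
    · -- contradiction: A (k-1) ≠ 0 is impossible
      exfalso
      have hkey : ((q-1)*(lam^2-d) - q*(lam+d))^2 > (q*(lam^2-d))^2 := by
        rw [hqdef]
        exact keyIneq lam d hd h1 hgap
      set Nv : ℝ := (q-1)*(lam^2-d) - q*(lam+d) with hNdef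
      set Pv : ℝ := q*(lam^2-d) with hPdef
      have hA2pos : 0 < A (k-1)^2 := (sq_nonneg _).lt_of_ne (Ne.symm (pow_ne_zero 2 hA))
      by_cases hk1 : k = 1
      · -- k = 1 : A 0 ≠ 0 but IC1 forces A 0 = 0
        rw [hk1] at hA
        have hA1 : A 1 = 0 := hAk 1 (by omega)
        have h := hIC1
        rw [hA1, mul_zero] at h
        exact hA (by simpa using (mul_eq_zero.mp h).resolve_left hd2)
      · have hk2 : 2 ≤ k := by omega
        have hIC2 : (q - 1) * A 1 = q * A 2 + (lam + 1) * A 0 := by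
          have e1 : lam * c 3 = A 2 + B 1 := by
            have := hEo 1 le_rfl (by omega)
            rwa [show 2*1+1 = 3 by ring] at this
          have e3 : lam * c 2 = A 1 := by
            have := hEe 1 (by omega)
            rwa [show 2*1 = 2 by ring] at this
          have e0 : lam * c 0 = A 0 := by
            have := hEe 0 (by omega)
            rwa [show 2*0 = 0 by ring] at this
          have e4 : A 0 = c 1 + A 1 := by
            have := hAstep 0 (by omega)
            rwa [show 2*0+1 = 1 by ring] at this
          have e5 : A 1 = c 3 + A 2 := by
            have := hAstep 1 (by omega)
            rwa [show 2*1+1 = 3 by ring] at this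
          have e6 : B 1 = B 0 + c 1 + c 2 := by
            have := hBstep 0
            rwa [show 2*0+1 = 1 by ring, show 2*0+2 = 2 by ring] at this
          rw [hqdef]
          linear_combination lam*e1 + lam^2*e5 + e0 + lam*hB0 - lam*e4 + lam*e6 + e3
        have hPN : Pv * A 2 = Nv * A 1 := by
          rw [hNdef, hPdef]
          linear_combination (-(lam^2-d))*hIC2 - (lam+1)*hIC1
        by_cases hk3 : k = 2
        · -- k = 2 : A 2 = 0 so Nv * A 1 = 0 with A 1 ≠ 0, forcing Nv = 0
          have hA2 : A 2 = 0 := hAk 2 (by omega)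
          rw [hA2, mul_zero] at hPN
          have hN0 : Nv = 0 := by
            rcases mul_eq_zero.mp hPN.symm with h | h
            · exact h
            · rw [hk3] at hA; simp at hA; exact absurd h hA
          rw [hN0] at hkey
          nlinarith [sq_nonneg Pv]
        · have hk4 : 3 ≤ k := by omega
          rcases lt_or_gt_of_ne hq0 with hqneg | hqpos
          · -- q < 0 : E t = A t * A (k-1), monotone decreasing chain
            set E : ℕ → ℝ := fun t => A t * A (k-1) with hEdef
            have hrec : ∀ t, 1 ≤ t → t + 2 ≤ k →
                q * E t = (2*q-1) * E (t+1) - q * E (t+2) := by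
              intro t ht htk
              have hst := star t ht htk
              rw [hEdef]
              dsimp only
              linear_combination (A (k-1)) * hst
            have inv : ∀ s t, 1 ≤ t → t + s = k - 1 → E t ≥ E (t+1) ∧ E t ≥ A (k-1)^2 := by
              intro s
              induction s with
              | zero =>
                intro t ht htk
                have ht1 : t = k - 1 := by omega
                have hE0 : E t = A (k-1)^2 := by
                  rw [hEdef]; dsimp only; rw [ht1]; ring
                have hE1 : E (t+1) = 0 := by
                  rw [hEdef]; dsimp only
                  rw [hAk (t+1) (by omega)]; ring
                rw [hE0, hE1]
                exact ⟨sq_nonneg _, le_rfl⟩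
              | succ s ih =>
                intro t ht htk
                obtain ⟨ih1, ih2⟩ := ih (t+1) (by omega) (by omega)
                have hr := hrec t ht (by omega)
                have h3 := inv_step_neg q (E t) (E (t+1)) (E (t+2)) (A (k-1)^2)
                  hqneg hr ih1 ih2 hA2pos
                exact ⟨h3, le_trans ih2 h3⟩
            obtain ⟨h12, h1A⟩ := inv (k-2) 1 le_rfl (by omega)
            obtain ⟨-, h2A⟩ := inv (k-3) 2 (by omega) (by omega)
            have hrel : Pv * E 2 = Nv * E 1 := by
              rw [hEdef]; dsimp only
              linear_combination (A (k-1)) * hPN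
            have hsq : Pv^2 * E 2^2 = Nv^2 * E 1^2 := by
              linear_combination (Pv * E 2 + Nv * E 1) * hrel
            exact final_contra Nv Pv (E 1) (E 2) (A (k-1)^2) hkey hsq h12 h2A hA2pos
          · -- q > 0 : E t = (-1)^(k-1-t) * (A t * A (k-1)), alternating chain
            set E : ℕ → ℝ := fun t => (-1:ℝ)^(k-1-t) * (A t * A (k-1)) with hEdef
            have hrec : ∀ t, 1 ≤ t → t + 2 ≤ k →
                q * E t = -((2*q-1) * E (t+1)) - q * E (t+2) := by
              intro t ht htk
              have hst := star t ht htk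
              rw [hEdef]
              dsimp only
              by_cases hlast : t + 2 ≤ k - 1
              · rw [show k-1-t = (k-1-(t+2))+1+1 by omega, show k-1-(t+1) = (k-1-(t+2))+1 by omega,
                  pow_succ, pow_succ]
                linear_combination ((-1:ℝ)^(k-1-(t+2)) * A (k-1)) * hst
              · have ht2 : t + 2 = k := by omega
                have hz : A (t+2) = 0 := hAk _ (by omega)
                rw [show k-1-t = 1 by omega, show k-1-(t+1) = 0 by omega,
                  show k-1-(t+2) = 0 by omega, hz]
                rw [hz] at hst
                ring_nf
                ring_nf at hst
                linear_combination (-(A (k-1))) * hst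
            have inv : ∀ s t, 1 ≤ t → t + s = k - 1 → E t ≥ E (t+1) ∧ E t ≥ A (k-1)^2 := by
              intro s
              induction s with
              | zero =>
                intro t ht htk
                have ht1 : t = k - 1 := by omega
                have hE0 : E t = A (k-1)^2 := by
                  rw [hEdef]; dsimp only; rw [ht1, show k-1-(k-1) = 0 by omega]; ring
                have hE1 : E (t+1) = 0 := by
                  rw [hEdef]; dsimp only
                  rw [hAk (t+1) (by omega)]; ring
                rw [hE0, hE1]
                exact ⟨sq_nonneg _, le_rfl⟩
              | succ s ih =>
                intro t ht htk
                obtain ⟨ih1, ih2⟩ := ih (t+1) (by omega) (by omega)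
                have hr := hrec t ht (by omega)
                have h3 := inv_step_pos q (E t) (E (t+1)) (E (t+2)) (A (k-1)^2)
                  hqpos hq4 hr ih1 ih2 hA2pos
                exact ⟨h3, le_trans ih2 h3⟩
            obtain ⟨h12, h1A⟩ := inv (k-2) 1 le_rfl (by omega)
            obtain ⟨-, h2A⟩ := inv (k-3) 2 (by omega) (by omega)
            have hrel : Pv * E 2 = -(Nv * E 1) := by
              have hE1 : E 1 = -((-1:ℝ)^(k-3) * (A 1 * A (k-1))) := by
                rw [hEdef]; dsimp only
                rw [show k-1-1 = (k-3)+1 by omega, pow_succ]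
                ring
              have hE2 : E 2 = (-1:ℝ)^(k-3) * (A 2 * A (k-1)) := by
                rw [hEdef]; dsimp only
                rw [show k-1-2 = k-3 by omega]
              rw [hE1, hE2]
              linear_combination ((-1:ℝ)^(k-3) * A (k-1)) * hPN
            have hsq : Pv^2 * E 2^2 = Nv^2 * E 1^2 := by
              linear_combination (Pv * E 2 - Nv * E 1) * hrel
            exact final_contra Nv Pv (E 1) (E 2) (A (k-1)^2) hkey hsq h12 h2A hA2pos
  -- conclude: every c j vanishes
  intro j hj
  rcases Nat.even_or_odd j with ⟨t, ht⟩ | ⟨t, ht⟩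
  · have hjt : j = 2*t := by omega
    have := hEe t (by omega)
    rw [← hjt] at this
    rw [hAll t] at this
    exact (mul_eq_zero.mp this).resolve_left h0
  · have hjt : j = 2*t+1 := by omega
    have := hAstep t (by omega)
    rw [hAll t, hAll (t+1)] at this
    rw [hjt]
    linarith

lemma eval_charpoly {ι : Type*} [Fintype ι] [DecidableEq ι] (M : Matrix ι ι ℝ) (t : ℝ) :
    M.charpoly.eval t = (t • (1 : Matrix ι ι ℝ) - M).det := by
  rw [Matrix.charpoly, ← Polynomial.coe_evalRingHom, RingHom.map_det]
  congr 1
  ext i j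
  by_cases h : i = j
  · subst h
    simp [Matrix.charmatrix_apply, Matrix.one_apply]
  · simp [Matrix.charmatrix_apply, Matrix.one_apply, h, Matrix.diagonal_apply_ne _ h]

lemma no_root (k : ℕ) (hk : 1 ≤ k) (α : ℕ → ℕ)
    (hα : ∀ j, j ≠ 1 → α j = 1) (hα1 : α 1 = 1 ∨ α 1 = 2)
    (lam : ℝ) (h0 : lam ≠ 0) (h1 : lam + 1 ≠ 0) (hgap : 4*lam^2 + 4*lam - 1 ≤ 0) :
    ¬ (adjMat (cographC α (2*k))).charpoly.IsRoot lam := by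
  intro hroot
  set m := 2*k with hmdef
  set G := cographC α m with hGdef
  set M := adjMat G with hMdef
  have hMapp : ∀ x y, M x y = if G.Adj x y then (1:ℝ) else 0 := fun x y => rfl
  have hdet : (lam • (1 : Matrix _ _ ℝ) - M).det = 0 := by
    rw [← _root_.eval_charpoly]
    exact hroot
  obtain ⟨v, hv0, hveq⟩ := Matrix.exists_mulVec_eq_zero_iff.mpr hdet
  have heig : ∀ x, ∑ y, M x y * v y = lam * v x := by
    intro x
    have hx := congrFun hveq x
    rw [Matrix.sub_mulVec, Matrix.smul_mulVec, Matrix.one_mulVec] at hx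
    have hx2 : lam * v x - ∑ y, M x y * v y = 0 := by
      simpa [Matrix.mulVec, dotProduct] using hx
    linarith [hx2]
  set c : ℕ → ℝ := fun j => if h : j < m then ∑ a : Fin (α j), v ⟨⟨j, h⟩, a⟩ else 0 with hcdef
  set R : ℕ → ℝ := fun j => ∑ j' ∈ Finset.range m,
      (if j' ≠ j ∧ (max j j') % 2 = 1 then c j' else 0) with hRdef
  -- the eigen-equation per vertex
  have hvertex : ∀ (j : ℕ) (hj : j < m) (a : Fin (α j)),
      lam * v ⟨⟨j, hj⟩, a⟩ = R j := by
    intro j hj a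
    set x : Σ j : Fin m, Fin (α j.val) := ⟨⟨j, hj⟩, a⟩ with hxdef
    have hx := heig x
    rw [← Finset.univ_sigma_univ, Finset.sum_sigma] at hx
    have hinner : ∀ j' : Fin m, (∑ a' : Fin (α j'.val), M x ⟨j', a'⟩ * v ⟨j', a'⟩)
        = (if j'.val ≠ j ∧ (max j j'.val) % 2 = 1 then c j'.val else 0) := by
      intro j'
      by_cases hjj : j'.val = j
      · -- same cell : no contribution
        rw [if_neg (by tauto)]
        apply Finset.sum_eq_zero
        intro a' _
        have hAdj := cograph_adj α m x ⟨j', a'⟩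
        have hM0 : M x ⟨j', a'⟩ = 0 := by
          rw [hMapp, if_neg]
          rw [hAdj]
          by_cases hpar : j % 2 = 1
          · rintro ⟨-, ⟨-, hp⟩ | ⟨hne, -⟩⟩
            · simp only [hxdef] at hp
              omega
            · exact hne (by simp only [hxdef]; omega)
          · -- j even : α j = 1 so the two vertices coincide
            have hj1 : α j = 1 := hα j (by omega)
            rintro ⟨hne, -⟩
            apply hne
            rw [sigma_eq_iff]
            refine ⟨by simp only [hxdef]; omega, ?_⟩
            rw [hxdef]
            have hcast : Fin (α j) = Fin (α j'.val) := by rw [hjj]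
            haveI : Subsingleton (Fin (α j)) := by rw [hj1]; infer_instance
            exact Subsingleton.helim hcast a a'
        rw [hM0, zero_mul]
      · -- different cells
        have hAdj : ∀ a' : Fin (α j'.val), (G.Adj x ⟨j', a'⟩) ↔ ((max j j'.val) % 2 = 1) := by
          intro a'
          rw [hGdef, cograph_adj α m x ⟨j', a'⟩]
          constructor
          · rintro ⟨-, ⟨heq, -⟩ | ⟨-, hp⟩⟩
            · exact absurd heq.symm (by dsimp only [hxdef] at heq ⊢; exact fun hh => hjj hh)
            · simp only [hxdef] at hp
              have hjlt : j < m := hj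
              have hjlt' : j'.val < m := j'.isLt
              omega
          · intro hp
            refine ⟨?_, Or.inr ⟨by simp only [hxdef]; omega, by simp only [hxdef]; omega⟩⟩
            rw [ne_eq, sigma_eq_iff]
            rintro ⟨heq, -⟩
            simp only [hxdef] at heq
            omega
        by_cases hcond : (max j j'.val) % 2 = 1
        · rw [if_pos ⟨fun hh => hjj hh, hcond⟩]
          have : ∀ a' : Fin (α j'.val), M x ⟨j', a'⟩ * v ⟨j', a'⟩ = v ⟨j', a'⟩ := by
            intro a'
            rw [hMapp, if_pos ((hAdj a').mpr hcond), one_mul]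
          rw [Finset.sum_congr rfl (fun a' _ => this a')]
          rw [hcdef]
          dsimp only
          rw [dif_pos j'.isLt]
        · rw [if_neg (by tauto)]
          apply Finset.sum_eq_zero
          intro a' _
          rw [hMapp, if_neg (fun hh => hcond ((hAdj a').mp hh)), zero_mul]
    rw [Finset.sum_congr rfl (fun j' _ => hinner j')] at hx
    rw [Fin.sum_univ_eq_sum_range (fun jn => if jn ≠ j ∧ (max j jn) % 2 = 1 then c jn else 0) m] at hx
    rw [hRdef]
    exact hx.symm
  -- cell equations
  have hcell : ∀ (j : ℕ), j < m → lam * c j = (α j : ℝ) * R j := by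
    intro j hj
    rw [hcdef]
    dsimp only
    rw [dif_pos hj, Finset.mul_sum]
    rw [Finset.sum_congr rfl (fun a _ => hvertex j hj a)]
    rw [Finset.sum_const, Finset.card_univ, Fintype.card_fin, nsmul_eq_mul]
  have hm2 : 2 ≤ m := by omega
  -- rewrite into the AuxA/AuxB form
  have hEe : ∀ t < k, lam * c (2*t) = AuxA c k t := by
    intro t ht
    have h2t : 2*t < m := by omega
    have hc := hcell (2*t) h2t
    rw [hα (2*t) (by omega), Nat.cast_one, one_mul] at hc
    rw [hc, hRdef]
    dsimp only
    have hconv : ∑ j' ∈ Finset.range m, (if j' ≠ 2*t ∧ (max (2*t) j') % 2 = 1 then c j' else 0)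
        = ∑ j' ∈ Finset.range m, (if 2*t < j' ∧ j' % 2 = 1 then c j' else 0) := by
      apply Finset.sum_congr rfl
      intro j' _
      have hiff : (j' ≠ 2*t ∧ (max (2*t) j') % 2 = 1) ↔ (2*t < j' ∧ j' % 2 = 1) := by omega
      rw [if_congr hiff rfl rfl]
    rw [hconv]
    exact sum_range_ite_odd c k t
  have hEo1 : lam * c 1 = (α 1 : ℝ) * (AuxA c k 1 + c 0) := by
    have hc := hcell 1 (by omega)
    rw [hc, hRdef]
    dsimp only
    congr 1
    have hsplit : ∀ j' ∈ Finset.range m, (if j' ≠ 1 ∧ (max 1 j') % 2 = 1 then c j' else 0)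
        = (if 2*1 < j' ∧ j' % 2 = 1 then c j' else 0) + (if j' = 0 then c j' else 0) := by
      intro j' _
      split_ifs <;> first | omega | (exfalso; omega) | ring1
    rw [Finset.sum_congr rfl hsplit, Finset.sum_add_distrib]
    rw [sum_range_ite_odd c k 1, Finset.sum_ite_eq' (Finset.range m) 0 c,
      if_pos (Finset.mem_range.mpr (by omega : (0:ℕ) < m))]
    rfl
  have hEo : ∀ t, 1 ≤ t → t < k → lam * c (2*t+1) = AuxA c k (t+1) + AuxB c t := by
    intro t ht htk
    have h2t : 2*t+1 < m := by omega
    have hc := hcell (2*t+1) h2t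
    rw [hα (2*t+1) (by omega), Nat.cast_one, one_mul] at hc
    rw [hc, hRdef]
    dsimp only
    have hsplit : ∀ j' ∈ Finset.range m, (if j' ≠ 2*t+1 ∧ (max (2*t+1) j') % 2 = 1 then c j' else 0)
        = (if 2*(t+1) < j' ∧ j' % 2 = 1 then c j' else 0) + (if j' < 2*t+1 then c j' else 0) := by
      intro j' _
      split_ifs <;> first | omega | (exfalso; omega) | ring1
    rw [Finset.sum_congr rfl hsplit, Finset.sum_add_distrib]
    rw [sum_range_ite_odd c k (t+1), sum_range_ite_lt c (2*t+1) m (by omega)]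
    rfl
  -- apply the core lemma
  have hd : (α 1 : ℝ) = 1 ∨ (α 1 : ℝ) = 2 := by
    rcases hα1 with h | h <;> [left; right] <;> rw [h] <;> norm_num
  have hczero : ∀ j < 2*k, c j = 0 :=
    core k hk lam (α 1 : ℝ) hd h0 h1 hgap c hEe hEo1 hEo
  -- conclude v = 0, contradiction
  apply hv0
  funext x
  rcases x with ⟨⟨j, hj⟩, a⟩
  have h := hvertex j hj a
  have hR0 : R j = 0 := by
    rw [hRdef]
    dsimp only
    apply Finset.sum_eq_zero
    intro j' hj'
    split_ifs
    · exact hczero j' (by simpa [hmdef] using Finset.mem_range.mp hj')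
    · rfl
  rw [hR0] at h
  have : v ⟨⟨j, hj⟩, a⟩ = 0 := by
    rcases mul_eq_zero.mp h with hh | hh
    · exact absurd hh h0
    · exact hh
  simpa using this


/-- for the antiregular graph `H_n` on `n ≥ 2` vertices (`H_n = C(1,1,…,1)`
with `n` ones for `n` even, and `H_n = C(1,2,1,…,1)` with `n - 1` parts for `n` odd),
every eigenvalue `< -1` is `< (-1-√2)/2` and every eigenvalue `> 0` is `> (-1+√2)/2`;
equivalently, `[(-1-√2)/2, (-1+√2)/2]` contains no eigenvalue other than possibly `0`
and `-1`.  Here `p` is the characteristic polynomial of the adjacency matrix `A_n`. -/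
theorem stmt13 (n : ℕ) (hn : 2 ≤ n) (p : Polynomial ℝ)
    (hpeven : Even n → p = (adjMat (cographC (fun _ => 1) n)).charpoly)
    (hpodd : Odd n → p = (adjMat (cographC (fun i => if i = 1 then 2 else 1) (n - 1))).charpoly) :
    (∀ lam : ℝ, p.IsRoot lam → lam < -1 → lam < (-1 - Real.sqrt 2) / 2) ∧
      (∀ lam : ℝ, p.IsRoot lam → 0 < lam → (-1 + Real.sqrt 2) / 2 < lam) ∧
      (∀ lam : ℝ, p.IsRoot lam → lam ≠ 0 → lam ≠ -1 →
        lam ∉ Set.Icc ((-1 - Real.sqrt 2) / 2) ((-1 + Real.sqrt 2) / 2)) := by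
  have hs2 : Real.sqrt 2 ^ 2 = 2 := Real.sq_sqrt (by norm_num)
  have hs2' : 1 < Real.sqrt 2 := by nlinarith [Real.sqrt_nonneg 2]
  have main : ∀ lam : ℝ, p.IsRoot lam → lam ≠ 0 → lam ≠ -1 →
      ¬((-1 - Real.sqrt 2)/2 ≤ lam ∧ lam ≤ (-1 + Real.sqrt 2)/2) := by
    rintro lam hroot hl0 hl1 ⟨hlo, hhi⟩
    have hgap : 4*lam^2 + 4*lam - 1 ≤ 0 := by nlinarith
    have h1 : lam + 1 ≠ 0 := fun h => hl1 (by linarith)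
    rcases Nat.even_or_odd n with he | ho
    · obtain ⟨k, hknn⟩ := he
      have hm : n = 2*k := by omega
      have hk : 1 ≤ k := by omega
      have hnr := no_root k hk (fun _ => 1) (fun j _ => rfl) (Or.inl rfl) lam hl0 h1 hgap
      rw [← hm] at hnr
      exact hnr (by rw [← hpeven ⟨k, hknn⟩]; exact hroot)
    · obtain ⟨k, hknn⟩ := ho
      have hm : n - 1 = 2*k := by omega
      have hk : 1 ≤ k := by omega
      have hnr := no_root k hk (fun i => if i = 1 then 2 else 1)
        (fun j hj => if_neg hj) (Or.inr (if_pos rfl)) lam hl0 h1 hgap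
      rw [← hm] at hnr
      exact hnr (by rw [← hpodd ⟨k, hknn⟩]; exact hroot)
  have hrpos : 0 < (-1 + Real.sqrt 2) / 2 := by nlinarith
  have hlneg : (-1 - Real.sqrt 2) / 2 < -1/2 := by nlinarith
  refine ⟨?_, ?_, ?_⟩
  · intro lam hroot hlt
    by_contra hcon
    push_neg at hcon
    exact main lam hroot (by linarith) (ne_of_lt hlt) ⟨hcon, by linarith⟩
  · intro lam hroot hpos
    by_contra hcon
    push_neg at hcon
    exact main lam hroot (ne_of_gt hpos) (by linarith) ⟨by linarith, hcon⟩
  · intro lam hroot h0 h1 hmem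
    exact main lam hroot h0 h1 ⟨hmem.1, hmem.2⟩
end
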